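/- Let E be a real vector space equipped with an arbitrary topology, let F be a real compactly generated vector space, and let T be the compact-open topology on the set of all continuous maps from E to F. Then the subset of linear continuous maps E → F is closed in the Kelleyfication kT of T. -/

import Mathlib

open Set Filter Topology

/-- The Kelleyfication of a topology `T`: a set is open iff its trace on every `T`-compact
set agrees with the trace of some `T`-open set. -/
def Kelley {X : Type*} (T : TopologicalSpace X) : TopologicalSpace X where
  IsOpen U := ∀ K : Set X, @IsCompact X T K → ∃ V : Set X, T.IsOpen V ∧ U ∩ K = V ∩ K
  isOpen_univ K _ := ⟨univ, T.isOpen_univ, rfl⟩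
  isOpen_inter := by
    intro s t hs ht K hK
    obtain ⟨Vs, hVs, hsK⟩ := hs K hK
    obtain ⟨Vt, hVt, htK⟩ := ht K hK
    refine ⟨Vs ∩ Vt, T.isOpen_inter _ _ hVs hVt, ?_⟩
    ext x
    have h1 := Set.ext_iff.mp hsK x
    have h2 := Set.ext_iff.mp htK x
    simp only [Set.mem_inter_iff] at *
    tauto
  isOpen_sUnion := by
    intro S hS K hK
    choose! V hV1 hV2 using fun t (ht : t ∈ S) => hS t ht K hK
    refine ⟨⋃ t ∈ S, V t, ?_, ?_⟩
    · letI := T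
      exact isOpen_biUnion fun t ht => hV1 t ht
    · ext x
      simp only [Set.mem_inter_iff, Set.mem_sUnion, Set.mem_iUnion, exists_prop]
      constructor
      · rintro ⟨⟨t, htS, hxt⟩, hxK⟩
        have h := Set.ext_iff.mp (hV2 t htS) x
        simp only [Set.mem_inter_iff] at h
        exact ⟨⟨t, htS, (h.mp ⟨hxt, hxK⟩).1⟩, hxK⟩
      · rintro ⟨⟨t, htS, hxt⟩, hxK⟩
        have h := Set.ext_iff.mp (hV2 t htS) x
        simp only [Set.mem_inter_iff] at h
        exact ⟨⟨t, htS, (h.mpr ⟨hxt, hxK⟩).1⟩, hxK⟩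

/-- The k-extension of a topology `T`: like the Kelleyfication, but quantifying only over
`T`-closed `T`-compact sets. -/
def KelleyEx {X : Type*} (T : TopologicalSpace X) : TopologicalSpace X where
  IsOpen U := ∀ K : Set X, @IsCompact X T K → @IsClosed X T K →
    ∃ V : Set X, T.IsOpen V ∧ U ∩ K = V ∩ K
  isOpen_univ K _ _ := ⟨univ, T.isOpen_univ, rfl⟩
  isOpen_inter := by
    intro s t hs ht K hK hKc
    obtain ⟨Vs, hVs, hsK⟩ := hs K hK hKc
    obtain ⟨Vt, hVt, htK⟩ := ht K hK hKc
    refine ⟨Vs ∩ Vt, T.isOpen_inter _ _ hVs hVt, ?_⟩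
    ext x
    have h1 := Set.ext_iff.mp hsK x
    have h2 := Set.ext_iff.mp htK x
    simp only [Set.mem_inter_iff] at *
    tauto
  isOpen_sUnion := by
    intro S hS K hK hKc
    choose! V hV1 hV2 using fun t (ht : t ∈ S) => hS t ht K hK hKc
    refine ⟨⋃ t ∈ S, V t, ?_, ?_⟩
    · letI := T
      exact isOpen_biUnion fun t ht => hV1 t ht
    · ext x
      simp only [Set.mem_inter_iff, Set.mem_sUnion, Set.mem_iUnion, exists_prop]
      constructor
      · rintro ⟨⟨t, htS, hxt⟩, hxK⟩
        have h := Set.ext_iff.mp (hV2 t htS) x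
        simp only [Set.mem_inter_iff] at h
        exact ⟨⟨t, htS, (h.mp ⟨hxt, hxK⟩).1⟩, hxK⟩
      · rintro ⟨⟨t, htS, hxt⟩, hxK⟩
        have h := Set.ext_iff.mp (hV2 t htS) x
        simp only [Set.mem_inter_iff] at h
        exact ⟨⟨t, htS, (h.mpr ⟨hxt, hxK⟩).1⟩, hxK⟩

/-- A topology is compactly generated iff it is Hausdorff and equals its Kelleyfication. -/
def IsCG {X : Type*} (T : TopologicalSpace X) : Prop :=
  @T2Space X T ∧ Kelley T = T

/-- Local compactness in the sense of the paper: every point of an open set `V` has an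
open neighbourhood contained in a compact subset of `V`. -/
def LocCompact {Y : Type*} (t : TopologicalSpace Y) : Prop :=
  ∀ y : Y, ∀ V : Set Y, t.IsOpen V → y ∈ V →
    ∃ K U : Set Y, y ∈ U ∧ t.IsOpen U ∧ U ⊆ K ∧ K ⊆ V ∧ @IsCompact Y t K

/-- A real compactly generated vector space: a compactly generated topology for which the
algebraic operations are continuous from the Kelleyfications of the product topologies. -/
def IsCGVS {X : Type*} [AddCommGroup X] [Module ℝ X] (T : TopologicalSpace X) : Prop :=
  IsCG T ∧
  Continuous[Kelley (@instTopologicalSpaceProd X X T T), T] (fun p : X × X => p.1 + p.2) ∧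
  Continuous[Kelley (@instTopologicalSpaceProd ℝ X inferInstance T), T]
    (fun p : ℝ × X => p.1 • p.2)

/-- Sequential completeness of a topologized additive group: every Cauchy sequence converges. -/
def SeqComplete {X : Type*} [AddCommGroup X] (U : TopologicalSpace X) : Prop :=
  ∀ u : ℕ → X, (∀ V ∈ @nhds X U 0, ∃ N : ℕ, ∀ m ≥ N, ∀ n ≥ N, u m - u n ∈ V) →
    ∃ x : X, Filter.Tendsto u Filter.atTop (@nhds X U x)

/-- Seip-convenient space: a compactly generated real vector space whose topology is the
Kelleyfication of a sequentially complete Hausdorff locally convex vector topology. -/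
def IsSeipConvenient {X : Type*} [AddCommGroup X] [Module ℝ X] (T : TopologicalSpace X) : Prop :=
  IsCGVS T ∧ ∃ U : TopologicalSpace X,
    @IsTopologicalAddGroup X U _ ∧ @ContinuousSMul ℝ X _ _ U ∧
    @LocallyConvexSpace ℝ X _ _ _ _ U ∧ @T2Space X U ∧ SeqComplete U ∧ T = Kelley U

/-- The compact-open topology on the full function space, generated by the usual subbasis. -/
def coTop {X Y : Type*} (tX : TopologicalSpace X) (tY : TopologicalSpace Y) :
    TopologicalSpace (X → Y) :=
  TopologicalSpace.generateFrom
    {S | ∃ (K : Set X) (V : Set Y), @IsCompact X tX K ∧ tY.IsOpen V ∧ S = {f | f '' K ⊆ V}}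

/-- `γ` is Riemann integrable to `x` on `[a,b]` with respect to the topology `T`. -/
def RiemannIntegrableTo {E : Type*} [AddCommGroup E] [Module ℝ E]
    (T : TopologicalSpace E) (a b : ℝ) (γ : ℝ → E) (x : E) : Prop :=
  ∀ V ∈ @nhds E T x, ∃ δ : ℝ, 0 < δ ∧ ∀ (k : ℕ) (t s : ℕ → ℝ),
    t 0 = a → t k = b → (∀ i < k, t i ≤ t (i + 1)) →
    (∀ i < k, t (i + 1) - t i < δ) →
    (∀ i < k, t i ≤ s i ∧ s i ≤ t (i + 1)) →
    (∑ i ∈ Finset.range k, (t (i + 1) - t i) • γ (s i)) ∈ V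

/-- `c` is differentiable to `x` at `t₀` (within `J`) with respect to the topology `T`. -/
def DiffTo {E : Type*} [AddCommGroup E] [Module ℝ E] (T : TopologicalSpace E)
    (J : Set ℝ) (c : ℝ → E) (t₀ : ℝ) (x : E) : Prop :=
  ∀ V ∈ @nhds E T x, ∃ δ : ℝ, 0 < δ ∧ ∀ t : ℝ, t₀ + t ∈ J → 0 < |t| → |t| < δ →
    t⁻¹ • (c (t₀ + t) - c t₀) ∈ V


section KelleyAux

lemma kelley_isOpen_of_isOpen {X : Type*} {T : TopologicalSpace X} {U : Set X}
    (hU : T.IsOpen U) : (Kelley T).IsOpen U :=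
  fun _K _ => ⟨U, hU, rfl⟩

lemma kelley_le {X : Type*} (T : TopologicalSpace X) : Kelley T ≤ T :=
  TopologicalSpace.le_def.mpr fun _U hU => kelley_isOpen_of_isOpen hU

lemma kelley_isCompact {X : Type*} {T : TopologicalSpace X} {K : Set X}
    (hK : @IsCompact X T K) : @IsCompact X (Kelley T) K := by
  refine @isCompact_of_finite_subcover X (Kelley T) K ?_
  intro ι U hU hcov
  choose V hV1 hV2 using fun i => hU i K hK
  have hcov' : K ⊆ ⋃ i, V i := by
    intro x hx
    obtain ⟨i, hi⟩ := mem_iUnion.mp (hcov hx)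
    have h := Set.ext_iff.mp (hV2 i) x
    simp only [Set.mem_inter_iff] at h
    exact mem_iUnion.mpr ⟨i, (h.mp ⟨hi, hx⟩).1⟩
  obtain ⟨t, ht⟩ := hK.elim_finite_subcover V hV1 hcov'
  refine ⟨t, fun x hx => ?_⟩
  obtain ⟨i, hit, hxi⟩ := mem_iUnion₂.mp (ht hx)
  have h := Set.ext_iff.mp (hV2 i) x
  simp only [Set.mem_inter_iff] at h
  exact mem_iUnion₂.mpr ⟨i, hit, (h.mpr ⟨hxi, hx⟩).1⟩

lemma kelley_continuous {X Y : Type*} {tX : TopologicalSpace X} {tY : TopologicalSpace Y}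
    {f : X → Y} (hf : Continuous[tX, tY] f) :
    Continuous[Kelley tX, Kelley tY] f := by
  rw [continuous_def]
  intro U hU K hK
  obtain ⟨V, hV, hVU⟩ := hU (f '' K) (hK.image hf)
  refine ⟨f ⁻¹' V, (continuous_def.mp hf) V hV, ?_⟩
  ext x
  simp only [Set.mem_inter_iff, Set.mem_preimage]
  constructor
  · rintro ⟨hxU, hxK⟩
    have h := Set.ext_iff.mp hVU (f x)
    simp only [Set.mem_inter_iff] at h
    exact ⟨(h.mp ⟨hxU, Set.mem_image_of_mem f hxK⟩).1, hxK⟩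
  · rintro ⟨hxV, hxK⟩
    have h := Set.ext_iff.mp hVU (f x)
    simp only [Set.mem_inter_iff] at h
    exact ⟨(h.mpr ⟨hxV, Set.mem_image_of_mem f hxK⟩).1, hxK⟩

lemma kelley_idem {X : Type*} (T : TopologicalSpace X) : Kelley (Kelley T) = Kelley T := by
  refine le_antisymm (kelley_le _) (TopologicalSpace.le_def.mpr ?_)
  intro U hU K hK
  obtain ⟨V, hV, hVU⟩ := hU K (kelley_isCompact hK)
  obtain ⟨W, hW, hWV⟩ := hV K hK
  exact ⟨W, hW, hVU.trans hWV⟩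

lemma continuous_kelley_codomain {X Y : Type*} {tX : TopologicalSpace X}
    {tY : TopologicalSpace Y} {f : X → Y} (hf : Continuous[Kelley tX, tY] f) :
    Continuous[Kelley tX, Kelley tY] f := by
  have h := kelley_continuous (tX := Kelley tX) (tY := tY) hf
  rwa [kelley_idem] at h

lemma continuous_of_kelley_dom {X Y : Type*} {tX : TopologicalSpace X}
    {tY : TopologicalSpace Y} {f : X → Y} (hf : Continuous[tX, tY] f) :
    Continuous[Kelley tX, tY] f := by
  rw [continuous_def] at hf ⊢
  exact fun U hU => kelley_isOpen_of_isOpen (hf U hU)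

end KelleyAux

/-- For a real vector space `E` with an arbitrary topology and a real compactly
generated vector space `F`, the set of linear maps among all continuous maps `E → F` is
closed in the Kelleyfication of the compact-open topology. -/
theorem linear_closed_in_kelley_compactOpen {E F : Type*}
    [AddCommGroup E] [Module ℝ E] [AddCommGroup F] [Module ℝ F]
    [tE : TopologicalSpace E] [tF : TopologicalSpace F] (hF : IsCGVS tF) :
    @IsClosed C(E, F) (Kelley (ContinuousMap.compactOpen : TopologicalSpace C(E, F)))
      {f : C(E, F) | IsLinearMap ℝ ⇑f} := by
  obtain ⟨⟨ht2, -⟩, hadd, hsmul⟩ := hF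
  letI kT : TopologicalSpace C(E, F) :=
    Kelley (ContinuousMap.compactOpen : TopologicalSpace C(E, F))
  have heval : ∀ x : E, Continuous[Kelley (ContinuousMap.compactOpen :
      TopologicalSpace C(E, F)), tF] (fun f : C(E, F) => f x) := fun x =>
    continuous_of_kelley_dom (continuous_eval_const x)
  have hA : ∀ x y : E, @IsClosed C(E, F)
      (Kelley (ContinuousMap.compactOpen : TopologicalSpace C(E, F)))
      {f : C(E, F) | f (x + y) = f x + f y} := by
    intro x y
    have hp : Continuous[Kelley (ContinuousMap.compactOpen : TopologicalSpace C(E, F)),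
        @instTopologicalSpaceProd F F tF tF]
        (fun f : C(E, F) => ((f x : F), (f y : F))) :=
      Continuous.prodMk (heval x) (heval y)
    have h2 : Continuous[Kelley (ContinuousMap.compactOpen : TopologicalSpace C(E, F)), tF]
        (fun f : C(E, F) => f x + f y) :=
      @Continuous.comp C(E, F) (F × F) F
        (Kelley (ContinuousMap.compactOpen : TopologicalSpace C(E, F)))
        (Kelley (@instTopologicalSpaceProd F F tF tF)) tF _ _ hadd
        (continuous_kelley_codomain hp)
    exact isClosed_eq (heval (x + y)) h2
  have hB : ∀ (c : ℝ) (x : E), @IsClosed C(E, F)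
      (Kelley (ContinuousMap.compactOpen : TopologicalSpace C(E, F)))
      {f : C(E, F) | f (c • x) = c • f x} := by
    intro c x
    have hp : Continuous[Kelley (ContinuousMap.compactOpen : TopologicalSpace C(E, F)),
        @instTopologicalSpaceProd ℝ F inferInstance tF]
        (fun f : C(E, F) => ((c : ℝ), (f x : F))) :=
      Continuous.prodMk continuous_const (heval x)
    have h2 : Continuous[Kelley (ContinuousMap.compactOpen : TopologicalSpace C(E, F)), tF]
        (fun f : C(E, F) => c • f x) :=
      @Continuous.comp C(E, F) (ℝ × F) F
        (Kelley (ContinuousMap.compactOpen : TopologicalSpace C(E, F)))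
        (Kelley (@instTopologicalSpaceProd ℝ F inferInstance tF)) tF _ _ hsmul
        (continuous_kelley_codomain hp)
    exact isClosed_eq (heval (c • x)) h2
  have hset : {f : C(E, F) | IsLinearMap ℝ ⇑f} =
      (⋂ x, ⋂ y, {f : C(E, F) | f (x + y) = f x + f y}) ∩
      ⋂ (c : ℝ), ⋂ x, {f : C(E, F) | f (c • x) = c • f x} := by
    ext f
    simp only [Set.mem_setOf_eq, Set.mem_inter_iff, Set.mem_iInter]
    exact ⟨fun h => ⟨fun x y => h.1 x y, fun c x => h.2 c x⟩,
      fun h => ⟨fun x y => h.1 x y, fun c x => h.2 c x⟩⟩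
  rw [hset]
  exact IsClosed.inter (isClosed_iInter fun x => isClosed_iInter fun y => hA x y)
    (isClosed_iInter fun c => isClosed_iInter fun x => hB c x)
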